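/- For the factorization S_n = C_n · S_{n-1} with induced action of S_{n-1} on C_n (defined by z^r · a = (z^r ▷ a)(z^r ◁ a), where z = (1,...,n), a ∈ S_{n-1}, z^r ▷ a ∈ S_{n-1}, z^r ◁ a ∈ C_n), there are exactly two orbits for the action ◁ of S_{n-1} on C_n: the singleton {1} and the set {z^r : 1 ≤ r ≤ n-1}. -/

import Mathlib

open Fin.NatCast in
private lemma finRotate_pow_apply (n m : ℕ) (i : Fin (n + 1)) :
    ((finRotate (n + 1)) ^ m) i = i + (m : Fin (n + 1)) := by
  induction m with
  | zero => simp
  | succ k ih =>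
    rw [pow_succ', Equiv.Perm.mul_apply, ih, finRotate_succ_apply]
    push_cast
    abel

private lemma perm_apply_inv_self' {α : Type*} (f : Equiv.Perm α) (x : α) :
    f (f⁻¹ x) = x := f.apply_symm_apply x

open Fin.NatCast in
private lemma zp_eq_one_of_fix (n : ℕ) (w : Subgroup.zpowers (finRotate (n + 1)))
    (h : (w : Equiv.Perm (Fin (n + 1))) (Fin.last n) = Fin.last n) : w = 1 := by
  obtain ⟨m, hm⟩ := mem_powers_iff_mem_zpowers.2 w.2
  have hm' : (finRotate (n + 1)) ^ m = (w : Equiv.Perm (Fin (n + 1))) := hm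
  have h2 : Fin.last n + (m : Fin (n + 1)) = Fin.last n := by
    rw [← finRotate_pow_apply, hm', h]
  have h3 : (m : Fin (n + 1)) = 0 := add_eq_left.1 h2
  obtain ⟨q, hq⟩ := Fin.natCast_eq_zero.1 h3
  have : (w : Equiv.Perm (Fin (n + 1))) = 1 := by
    rw [← hm', hq, pow_mul]
    have hone : (finRotate (n + 1)) ^ (n + 1) = 1 := by
      ext i
      simp [finRotate_pow_apply]
    rw [hone, one_pow]
  exact Subtype.ext this

theorem two_orbits_Cn (n : ℕ) (hn : 1 ≤ n)
    (rhd : Subgroup.zpowers (finRotate (n + 1)) →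
      MulAction.stabilizer (Equiv.Perm (Fin (n + 1))) (Fin.last n) →
      MulAction.stabilizer (Equiv.Perm (Fin (n + 1))) (Fin.last n))
    (lhd : Subgroup.zpowers (finRotate (n + 1)) →
      MulAction.stabilizer (Equiv.Perm (Fin (n + 1))) (Fin.last n) →
      Subgroup.zpowers (finRotate (n + 1)))
    (hfac : ∀ (x : Subgroup.zpowers (finRotate (n + 1)))
      (a : MulAction.stabilizer (Equiv.Perm (Fin (n + 1))) (Fin.last n)), (x : Equiv.Perm (Fin (n + 1))) * (a : Equiv.Perm (Fin (n + 1))) =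
      (rhd x a : Equiv.Perm (Fin (n + 1))) * (lhd x a : Equiv.Perm (Fin (n + 1)))) :
    (∀ a, lhd 1 a = 1) ∧
      {y | ∃ a, lhd ⟨finRotate (n + 1), Subgroup.mem_zpowers _⟩ a = y} =
        {y : Subgroup.zpowers (finRotate (n + 1)) | y ≠ 1} := by
  -- stabilizer elements fix the last point
  have hstab : ∀ a : MulAction.stabilizer (Equiv.Perm (Fin (n + 1))) (Fin.last n),
      (a : Equiv.Perm (Fin (n + 1))) (Fin.last n) = Fin.last n := by
    intro a
    have := a.2
    rwa [MulAction.mem_stabilizer_iff, Equiv.Perm.smul_def] at this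
  -- key formula
  have key : ∀ (x : Subgroup.zpowers (finRotate (n + 1)))
      (a : MulAction.stabilizer (Equiv.Perm (Fin (n + 1))) (Fin.last n)),
      ((lhd x a : Equiv.Perm (Fin (n + 1))))⁻¹ (Fin.last n) =
        ((a : Equiv.Perm (Fin (n + 1))))⁻¹ (((x : Equiv.Perm (Fin (n + 1))))⁻¹ (Fin.last n)) := by
    intro x a
    have h1 : (lhd x a : Equiv.Perm (Fin (n + 1))) =
        (rhd x a : Equiv.Perm (Fin (n + 1)))⁻¹ *
          ((x : Equiv.Perm (Fin (n + 1))) * (a : Equiv.Perm (Fin (n + 1)))) := by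
      rw [hfac x a, inv_mul_cancel_left]
    have h2 : ((lhd x a : Equiv.Perm (Fin (n + 1))))⁻¹ =
        ((a : Equiv.Perm (Fin (n + 1))))⁻¹ * ((x : Equiv.Perm (Fin (n + 1))))⁻¹ *
          (rhd x a : Equiv.Perm (Fin (n + 1))) := by
      rw [h1]; simp [mul_inv_rev, mul_assoc]
    rw [h2]
    simp [Equiv.Perm.mul_apply, hstab (rhd x a)]
  have hone_ne : (1 : Fin (n + 1)) ≠ 0 := by
    intro h
    have := congrArg Fin.val h
    rw [Fin.val_one', Fin.val_zero, Nat.mod_eq_of_lt (by omega)] at this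
    omega
  have hrot_ne : (finRotate (n + 1))⁻¹ (Fin.last n) ≠ Fin.last n := by
    intro h
    have h' : finRotate (n + 1) (Fin.last n) = Fin.last n := by
      conv_lhs => rw [← h]
      simp
    rw [finRotate_succ_apply] at h'
    exact hone_ne (add_eq_left.1 h')
  constructor
  · intro a
    have hk := key 1 a
    have ha : ((a : Equiv.Perm (Fin (n + 1))))⁻¹ (Fin.last n) = Fin.last n := by
      apply Equiv.injective (a : Equiv.Perm (Fin (n + 1)))
      rw [perm_apply_inv_self', hstab a]
    simp only [OneMemClass.coe_one, inv_one, Equiv.Perm.one_apply, ha] at hk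
    apply zp_eq_one_of_fix
    conv_lhs => rw [← hk]
    simp
  · set z : Subgroup.zpowers (finRotate (n + 1)) :=
      ⟨finRotate (n + 1), Subgroup.mem_zpowers _⟩ with hz
    ext y
    simp only [Set.mem_setOf_eq]
    constructor
    · rintro ⟨a, rfl⟩
      intro h1
      have hk := key z a
      rw [h1] at hk
      simp only [OneMemClass.coe_one, inv_one, Equiv.Perm.one_apply] at hk
      have h2 : ((z : Equiv.Perm (Fin (n + 1))))⁻¹ (Fin.last n) = Fin.last n := by
        have := congrArg (a : Equiv.Perm (Fin (n + 1))) hk.symm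
        rwa [perm_apply_inv_self', hstab a] at this
      exact hrot_ne h2
    · intro hy
      set p : Fin (n + 1) := ((y : Equiv.Perm (Fin (n + 1))))⁻¹ (Fin.last n) with hp
      set q : Fin (n + 1) := (finRotate (n + 1))⁻¹ (Fin.last n) with hq
      have hpne : p ≠ Fin.last n := by
        intro h
        apply hy
        apply zp_eq_one_of_fix
        have := congrArg (y : Equiv.Perm (Fin (n + 1))) h
        rw [hp, perm_apply_inv_self'] at this
        exact this.symm
      have haMem : Equiv.swap p q ∈
          MulAction.stabilizer (Equiv.Perm (Fin (n + 1))) (Fin.last n) := by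
        rw [MulAction.mem_stabilizer_iff, Equiv.Perm.smul_def]
        exact Equiv.swap_apply_of_ne_of_ne (Ne.symm hpne) (Ne.symm hrot_ne)
      refine ⟨⟨Equiv.swap p q, haMem⟩, ?_⟩
      -- show lhd z a = y
      have hk := key z ⟨Equiv.swap p q, haMem⟩
      have hz' : (z : Equiv.Perm (Fin (n + 1))) = finRotate (n + 1) := rfl
      rw [hz'] at hk
      have hsw : (Equiv.swap p q)⁻¹ ((finRotate (n + 1))⁻¹ (Fin.last n)) = p := by
        rw [Equiv.swap_inv, ← hq, Equiv.swap_apply_right]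
      have hk2 : ((lhd z ⟨Equiv.swap p q, haMem⟩ : Equiv.Perm (Fin (n + 1))))⁻¹ (Fin.last n) = p := by
        rw [hk]; exact hsw
      -- injectivity
      have hu : (y * (lhd z ⟨Equiv.swap p q, haMem⟩)⁻¹ :
          Subgroup.zpowers (finRotate (n + 1))) = 1 := by
        apply zp_eq_one_of_fix
        push_cast
        simp only [Function.comp_apply]
        rw [hk2, hp, perm_apply_inv_self']
      have := mul_inv_eq_one.1 hu
      exact this.symm
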